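/- Let ξ ≠ 0, λ < 0, γ > 1, a₀ > 0, b₀ > 0, a₁ ∈ ℝ, and b₁ ≤ 0. Then every solution of the Emden system a''(t) − ξ²/a(t)³ = λ/(a(t)^{2γ−1} b(t)^{γ−1}), b''(t) = λ/(a(t)^{2γ−2} b(t)^{γ}), a(0) = a₀, a'(0) = a₁, b(0) = b₀, b'(0) = b₁ blows up in finite time: there is no pair of C² functions a, b : [0,∞) → ℝ with a(t) > 0 and b(t) > 0 for all t ≥ 0 satisfying the system and the initial conditions. -/

import Mathlib

open Topology


/-- Finite-time blowup for the Emden system with γ > 1, λ < 0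
    (written `lam`) and b₁ ≤ 0: there is no pair of positive C² functions a, b
    on [0,∞) solving a'' − ξ²/a³ = λ/(a^{2γ−1} b^{γ−1}),
    b'' = λ/(a^{2γ−2} b^γ) with a(0) = a₀ > 0, a'(0) = a₁, b(0) = b₀ > 0,
    b'(0) = b₁. -/
theorem emden_system_blowup_gamma_gt_one_lambda_neg
    (ξ lam γ a₀ a₁ b₀ b₁ : ℝ)
    (hξ : ξ ≠ 0) (hlam : lam < 0) (hγ : 1 < γ)
    (ha₀ : 0 < a₀) (hb₀ : 0 < b₀) (hb₁ : b₁ ≤ 0) :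
    ¬ ∃ a b : ℝ → ℝ,
      ContDiffOn ℝ 2 a (Set.Ici 0) ∧ ContDiffOn ℝ 2 b (Set.Ici 0) ∧
      (∀ t ∈ Set.Ici (0 : ℝ), 0 < a t ∧ 0 < b t) ∧
      (∀ t ∈ Set.Ici (0 : ℝ),
        derivWithin (derivWithin a (Set.Ici 0)) (Set.Ici 0) t
          - ξ ^ 2 / (a t) ^ 3
          = lam / ((a t) ^ (2 * γ - 1) * (b t) ^ (γ - 1))) ∧
      (∀ t ∈ Set.Ici (0 : ℝ),
        derivWithin (derivWithin b (Set.Ici 0)) (Set.Ici 0) t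
          = lam / ((a t) ^ (2 * γ - 2) * (b t) ^ γ)) ∧
      a 0 = a₀ ∧ derivWithin a (Set.Ici 0) 0 = a₁ ∧
      b 0 = b₀ ∧ derivWithin b (Set.Ici 0) 0 = b₁ := by
  rintro ⟨a, b, ha, hb, hpos, -, heqb, -, -, hb0, hb1⟩
  have hu : UniqueDiffOn ℝ (Set.Ici (0:ℝ)) := uniqueDiffOn_Ici 0
  set B := derivWithin b (Set.Ici 0) with hBdef
  have hB1 : ContDiffOn ℝ 1 B (Set.Ici 0) := hb.derivWithin hu (by norm_num)
  have hBcont : ContinuousOn B (Set.Ici 0) := hB1.continuousOn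
  -- b'' < 0 on Ici 0
  have hneg : ∀ t ∈ Set.Ici (0:ℝ), derivWithin B (Set.Ici 0) t < 0 := by
    intro t ht
    rw [hBdef, heqb t ht]
    exact div_neg_of_neg_of_pos hlam
      (mul_pos (Real.rpow_pos_of_pos (hpos t ht).1 _)
        (Real.rpow_pos_of_pos (hpos t ht).2 _))
  -- B = b' is strictly decreasing on Ici 0
  have hBanti : StrictAntiOn B (Set.Ici 0) := by
    apply strictAntiOn_of_deriv_neg (convex_Ici 0) hBcont
    intro x hx
    rw [interior_Ici] at hx
    have hmem : Set.Ici (0:ℝ) ∈ 𝓝 x := Ici_mem_nhds hx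
    rw [← derivWithin_of_mem_nhds hmem]
    exact hneg x (Set.mem_Ici.2 (le_of_lt hx))
  have hc0 : B 1 < 0 := by
    have h10 : B 1 < B 0 := hBanti (Set.mem_Ici.2 (le_refl 0)) (by norm_num) one_pos
    rw [hb1] at h10; linarith
  set c := B 1 with hcdef
  have hcne : c ≠ 0 := ne_of_lt hc0
  have hb1pos : 0 < b 1 := (hpos 1 (by norm_num)).2
  -- derivWithin = deriv for x > 0
  have hderiv : ∀ x : ℝ, 0 < x → HasDerivAt b (B x) x := by
    intro x hx
    have hmem : Set.Ici (0:ℝ) ∈ 𝓝 x := Ici_mem_nhds hx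
    have hd : DifferentiableWithinAt ℝ b (Set.Ici 0) x :=
      (hb.differentiableOn (by norm_num)) x (le_of_lt hx)
    have hda : DifferentiableAt ℝ b x := hd.differentiableAt hmem
    have hBx : B x = deriv b x := derivWithin_of_mem_nhds hmem
    rw [hBx]
    exact hda.hasDerivAt
  -- g t = b t - c * t is strictly decreasing on Ici 1
  have hganti : StrictAntiOn (fun t => b t - c * t) (Set.Ici 1) := by
    apply strictAntiOn_of_deriv_neg (convex_Ici 1)
    · exact (hb.continuousOn.mono (Set.Ici_subset_Ici.2 (by norm_num))).sub
        ((continuous_const.mul continuous_id).continuousOn)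
    · intro x hx
      rw [interior_Ici] at hx
      have hx0 : (0:ℝ) < x := lt_trans one_pos hx
      have hgd : HasDerivAt (fun t => b t - c * t) (B x - c) x := by
        have h1 : HasDerivAt (fun t : ℝ => c * t) c x := by
          simpa using (hasDerivAt_id x).const_mul c
        exact (hderiv x hx0).sub h1
      rw [hgd.deriv]
      have hlt : B x < B 1 :=
        hBanti (by norm_num) (Set.mem_Ici.2 (le_of_lt hx0)) hx
      rw [hcdef]; linarith
  -- choose T large enough
  have hd0 : 0 < (b 1 + 1) / (-c) := div_pos (by linarith) (by linarith)
  have hdc : c * ((b 1 + 1) / (-c)) = -(b 1 + 1) := by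
    have h := div_mul_cancel₀ (b 1 + 1) (neg_ne_zero.mpr hcne)
    linear_combination -h
  set T : ℝ := 1 + (b 1 + 1) / (-c) with hTdef
  have hTgt : 1 < T := by rw [hTdef]; linarith
  have hgT : b T - c * T < b 1 - c * 1 :=
    hganti (Set.mem_Ici.2 le_rfl) (Set.mem_Ici.2 (le_of_lt hTgt)) hTgt
  have hcT : c * T = c - (b 1 + 1) := by
    rw [hTdef, mul_add, mul_one, hdc]; ring
  have hbT : 0 < b T := (hpos T (Set.mem_Ici.2 (by linarith))).2
  rw [hcT] at hgT
  linarith
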